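/- Connective constant via escape probability: under the hypotheses that the infinite SAW η^∞ exists and satisfies P(η^∞[0,k]=ζ) = μ^{−k} P(η^∞ escapes ζ) for all finite self-avoiding paths ζ, one has μ = 2d · P(0 ∉ η^∞[1,∞) | η^∞(0) = e) for any neighbour e of the origin, and more generally μ^k = c_k · P(η^∞[1,∞) ∩ η^k[1,k] = ∅) where η^k is an independent uniform k-step SAW. -/

import Mathlib

open MeasureTheory Filter Topology

/-- `x` and `y` are nearest neighbours in `ℤ^d`. -/
def IsNbr (d : ℕ) (x y : Fin d → ℤ) : Prop :=
  (∑ j, (x j - y j).natAbs) = 1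

/-- Self-avoiding paths of length `n` in `ℤ^d` started at the origin,
encoded as functions `ℕ → ℤ^d` frozen after time `n`. -/
def SAWset (d n : ℕ) : Set (ℕ → Fin d → ℤ) :=
  {ω | ω 0 = 0 ∧ (∀ i < n, IsNbr d (ω (i + 1)) (ω i)) ∧
    (∀ i ≤ n, ∀ j ≤ n, ω i = ω j → i = j) ∧ ∀ i, n ≤ i → ω i = ω n}

/-- The number `c_n` of `n`-step self-avoiding paths. -/
noncomputable def cSAW (d n : ℕ) : ℕ := Nat.card (SAWset d n)

/-- The cylinder event that a path starts with `ζ` up to time `k`. -/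
def startSet (d k : ℕ) (ζ : ℕ → Fin d → ℤ) : Set (ℕ → Fin d → ℤ) :=
  {ω | ∀ i ≤ k, ω i = ζ i}

/-- The event that a path (translated to start at `ζ k`) escapes `ζ`. -/
def escSet (d k : ℕ) (ζ : ℕ → Fin d → ℤ) : Set (ℕ → Fin d → ℤ) :=
  {ω | ∀ i, 1 ≤ i → ∀ j ≤ k, ω i + ζ k ≠ ζ j}

/-- `c_m(ζ)`: the number of `m`-step self-avoiding paths starting with `ζ`. -/
noncomputable def cExt (d m k : ℕ) (ζ : ℕ → Fin d → ℤ) : ℕ :=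
  Nat.card ((SAWset d m ∩ startSet d k ζ : Set (ℕ → Fin d → ℤ)))

/-- Infinite self-avoiding paths started at the origin. -/
def InfSAW (d : ℕ) : Set (ℕ → Fin d → ℤ) :=
  {ω | ω 0 = 0 ∧ (∀ i, IsNbr d (ω (i + 1)) (ω i)) ∧ Function.Injective ω}

/-- The `m`-fold shift `T^m`: `(T^m ω)(i) = ω(m+i) − ω(m)`. -/
def shiftW (d m : ℕ) (ω : ℕ → Fin d → ℤ) : ℕ → Fin d → ℤ :=
  fun i => ω (m + i) - ω m

/-- The shift operator `T`. -/
def Tsh (d : ℕ) (ω : ℕ → Fin d → ℤ) : ℕ → Fin d → ℤ :=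
  fun i => ω (i + 1) - ω 1

lemma measurable_pair {d : ℕ} (i j : ℕ) (s : Set ((Fin d → ℤ) × (Fin d → ℤ))) :
    MeasurableSet {ω : ℕ → Fin d → ℤ | (ω i, ω j) ∈ s} := by
  have hm : Measurable (fun ω : ℕ → Fin d → ℤ => (ω i, ω j)) :=
    (measurable_pi_apply i).prodMk (measurable_pi_apply j)
  exact hm (s.to_countable.measurableSet)

lemma InfSAW_measurable (d : ℕ) : MeasurableSet (InfSAW d) := by
  have : InfSAW d = {ω : ℕ → Fin d → ℤ | (ω 0, ω 0) ∈ {p | p.1 = 0}} ∩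
      ((⋂ i : ℕ, {ω | (ω (i+1), ω i) ∈ {p | IsNbr d p.1 p.2}}) ∩
       ⋂ i : ℕ, ⋂ j : ℕ, {ω | (ω i, ω j) ∈ {p : (Fin d → ℤ) × (Fin d → ℤ) | p.1 = p.2 → i = j}}) := by
    ext ω
    simp only [InfSAW, Set.mem_setOf_eq, Set.mem_inter_iff, Set.mem_iInter, Function.Injective]

  rw [this]
  exact (measurable_pair _ _ _).inter
    ((MeasurableSet.iInter fun i => measurable_pair _ _ _).inter
     (MeasurableSet.iInter fun i => MeasurableSet.iInter fun j => measurable_pair _ _ _))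


lemma nbr_step {d : ℕ} {x y : Fin d → ℤ} (h : IsNbr d x y) (j : Fin d) :
    (x j - y j).natAbs ≤ 1 := by
  calc (x j - y j).natAbs ≤ ∑ j', (x j' - y j').natAbs := Finset.single_le_sum (f := fun j' => (x j' - y j').natAbs) (fun _ _ => Nat.zero_le _) (Finset.mem_univ j)
  _ = 1 := h

lemma SAW_bound {d k : ℕ} {ζ : ℕ → Fin d → ℤ} (hζ : ζ ∈ SAWset d k) :
    ∀ i, ∀ j, (ζ i j).natAbs ≤ k := by
  obtain ⟨h0, hnb, hinj, hfr⟩ := hζ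
  have key : ∀ i ≤ k, ∀ j, (ζ i j).natAbs ≤ i := by
    intro i
    induction i with
    | zero => intro _ j; simp [h0]
    | succ n ih =>
      intro hn j
      have h1 : (ζ (n+1) j - ζ n j).natAbs ≤ 1 := nbr_step (hnb n (by omega)) j
      have h2 : (ζ n j).natAbs ≤ n := ih (by omega) j
      have := Int.natAbs_add_le (ζ (n+1) j - ζ n j) (ζ n j)
      simp at this
      omega
  intro i j
  rcases le_or_gt i k with h | h
  · exact le_trans (key i h j) h
  · rw [hfr i h.le]; exact key k le_rfl j

lemma frozen_ext {d k : ℕ} {ζ₁ ζ₂ : ℕ → Fin d → ℤ} (h₁ : ζ₁ ∈ SAWset d k)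
    (h₂ : ζ₂ ∈ SAWset d k) (h : ∀ i ≤ k, ζ₁ i = ζ₂ i) : ζ₁ = ζ₂ := by
  funext i
  rcases le_or_gt i k with hi | hi
  · exact h i hi
  · rw [h₁.2.2.2 i hi.le, h₂.2.2.2 i hi.le, h k le_rfl]

lemma SAW_finite (d k : ℕ) : (SAWset d k).Finite := by
  classical
  have hbox : (Set.univ.pi fun _ : Fin (k+1) => Set.univ.pi fun _ : Fin d =>
      Set.Icc (-(k:ℤ)) k).Finite :=
    Set.Finite.pi fun _ => Set.Finite.pi fun _ => Set.finite_Icc _ _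
  apply Set.Finite.of_finite_image (f := fun (ζ : ℕ → Fin d → ℤ) (i : Fin (k+1)) (j : Fin d) => ζ i j)
  · apply hbox.subset
    rintro f ⟨ζ, hζ, rfl⟩
    intro i _ 
    intro j _
    have := SAW_bound hζ i j
    simp [Set.mem_Icc]
    omega
  · intro ζ₁ h₁ ζ₂ h₂ h
    apply frozen_ext h₁ h₂
    intro i hi
    have := congrFun h ⟨i, by omega⟩
    simpa using this


lemma startSet_measurable (d k : ℕ) (ζ : ℕ → Fin d → ℤ) :
    MeasurableSet (startSet d k ζ) := by
  have : startSet d k ζ = ⋂ i ∈ Set.Iic k, {ω : ℕ → Fin d → ℤ | ω i = ζ i} := by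
    ext ω; simp [startSet, Set.mem_iInter]
  rw [this]
  exact MeasurableSet.biInter (Set.to_countable _) fun i _ =>
    measurableSet_eq_fun (measurable_pi_apply i) measurable_const

lemma truncate_mem {d k : ℕ} {ω : ℕ → Fin d → ℤ} (hω : ω ∈ InfSAW d) :
    (fun i => ω (min i k)) ∈ SAWset d k ∧ ω ∈ startSet d k (fun i => ω (min i k)) := by
  obtain ⟨h0, hnb, hinj⟩ := hω
  refine ⟨⟨by simpa using h0, ?_, ?_, ?_⟩, ?_⟩
  · intro i hi
    have h1 : min (i+1) k = i + 1 := by omega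
    have h2 : min i k = i := by omega
    simp only [h1, h2]
    exact hnb i
  · intro i hi j hj h
    have h1 : min i k = i := by omega
    have h2 : min j k = j := by omega
    simp only [h1, h2] at h
    exact hinj h
  · intro i hi
    simp [min_eq_right hi, min_self]
  · intro i hi
    simp [min_eq_left hi]

lemma sum_start (d k : ℕ) (P : Measure (ℕ → Fin d → ℤ)) [IsProbabilityMeasure P]
    (hsupp : P (InfSAW d) = 1) (hfin : (SAWset d k).Finite) :
    ∑ ζ ∈ hfin.toFinset, P (startSet d k ζ) = 1 := by
  classical
  have hdisj : (↑hfin.toFinset : Set (ℕ → Fin d → ℤ)).PairwiseDisjoint (startSet d k) := by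
    intro ζ₁ h₁ ζ₂ h₂ hne
    simp only [Set.Finite.coe_toFinset] at h₁ h₂
    refine Set.disjoint_left.mpr fun ω hω₁ hω₂ => hne ?_
    exact frozen_ext h₁ h₂ fun i hi => (hω₁ i hi).symm.trans (hω₂ i hi)
  rw [← measure_biUnion_finset hdisj fun ζ _ => startSet_measurable d k ζ]
  refine le_antisymm prob_le_one ?_
  rw [← hsupp]
  apply measure_mono
  intro ω hω
  simp only [Set.mem_iUnion, Set.Finite.mem_toFinset]
  exact ⟨_, (truncate_mem hω).1, (truncate_mem hω).2⟩

lemma meas_congr {d : ℕ} (P : Measure (ℕ → Fin d → ℤ)) [IsProbabilityMeasure P]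
    (hS : MeasurableSet (InfSAW d)) (hsupp : P (InfSAW d) = 1)
    {A B : Set (ℕ → Fin d → ℤ)} (h : A ∩ InfSAW d = B ∩ InfSAW d) : P A = P B := by
  apply measure_congr
  have hc : P (InfSAW d)ᶜ = 0 := by
    rw [prob_compl_eq_zero_iff hS]; exact hsupp
  have hae : ∀ᵐ ω ∂P, ω ∈ InfSAW d := by
    rw [MeasureTheory.ae_iff]
    exact hc
  filter_upwards [hae] with ω hω
  show (ω ∈ A) = (ω ∈ B)
  simp only [eq_iff_iff]
  constructor
  · intro hA
    have : ω ∈ B ∩ InfSAW d := h ▸ ⟨hA, hω⟩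
    exact this.1
  · intro hB
    have : ω ∈ A ∩ InfSAW d := h.symm ▸ ⟨hB, hω⟩
    exact this.1


def revP {d : ℕ} (k : ℕ) (ζ : ℕ → Fin d → ℤ) : ℕ → Fin d → ℤ :=
  fun i => ζ (k - i) - ζ k

lemma isNbr_symm {d : ℕ} {x y : Fin d → ℤ} (h : IsNbr d x y) : IsNbr d y x := by
  unfold IsNbr at *
  rw [← h]
  apply Finset.sum_congr rfl
  intro j _
  rw [← Int.natAbs_neg]
  congr 1
  ring

lemma rev_mem {d k : ℕ} {ζ : ℕ → Fin d → ℤ} (hζ : ζ ∈ SAWset d k) :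
    revP k ζ ∈ SAWset d k := by
  obtain ⟨h0, hnb, hinj, hfr⟩ := hζ
  refine ⟨by simp [revP], ?_, ?_, ?_⟩
  · intro i hi
    have hnb' : IsNbr d (ζ (k - (i+1))) (ζ (k - i)) := by
      have h1 : k - (i+1) + 1 = k - i := by omega
      have := isNbr_symm (hnb (k - (i+1)) (by omega))
      rwa [h1] at this
    unfold IsNbr at hnb' ⊢
    calc ∑ j, ((revP k ζ (i+1)) j - (revP k ζ i) j).natAbs
        = ∑ j, (ζ (k-(i+1)) j - ζ (k-i) j).natAbs :=
          Finset.sum_congr rfl fun j _ => by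
            simp only [revP, Pi.sub_apply, sub_sub_sub_cancel_right]
      _ = 1 := hnb'
  · intro i hi j hj h
    have h2 : ζ (k - i) = ζ (k - j) := sub_left_inj.mp h
    have := hinj (k - i) (Nat.sub_le _ _) (k - j) (Nat.sub_le _ _) h2
    omega
  · intro i hi
    have h1 : k - i = 0 := by omega
    simp only [revP, h1, Nat.sub_self]

lemma rev_rev {d k : ℕ} {ζ : ℕ → Fin d → ℤ} (hζ : ζ ∈ SAWset d k) :
    revP k (revP k ζ) = ζ := by
  obtain ⟨h0, hnb, hinj, hfr⟩ := hζ
  funext i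
  simp only [revP, Nat.sub_self, h0]
  rcases le_or_gt i k with hi | hi
  · have h2 : k - (k - i) = i := by omega
    rw [h2]
    ring
  · have h1 : k - i = 0 := by omega
    rw [h1, hfr i hi.le]
    simp only [Nat.sub_zero]
    ring

lemma mem_ne_zero {d : ℕ} {ω : ℕ → Fin d → ℤ} (hω : ω ∈ InfSAW d) {i : ℕ} (hi : 1 ≤ i) :
    ω i ≠ 0 := by
  intro h
  have := hω.2.2 (h.trans hω.1.symm)
  omega

lemma esc_target {d k : ℕ} {ζ : ℕ → Fin d → ℤ} (hζ : ζ ∈ SAWset d k) :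
    escSet d k ζ ∩ InfSAW d =
    {ω | ∀ i, 1 ≤ i → ∀ j, 1 ≤ j → j ≤ k → ω i ≠ revP k ζ j} ∩ InfSAW d := by
  ext ω
  simp only [Set.mem_inter_iff, Set.mem_setOf_eq, escSet]
  constructor
  · rintro ⟨hesc, hω⟩
    refine ⟨fun i hi j hj1 hjk h => ?_, hω⟩
    apply hesc i hi (k - j) (Nat.sub_le _ _)
    rw [h]
    simp only [revP]
    ring
  · rintro ⟨htar, hω⟩
    refine ⟨fun i hi j hj h => ?_, hω⟩
    rcases Nat.eq_or_lt_of_le hj with hj' | hj'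
    · subst hj'
      exact mem_ne_zero hω hi (add_eq_right.mp h)
    · apply htar i hi (k - j) (by omega) (by omega)
      simp only [revP]
      have h2 : k - (k - j) = j := by omega
      rw [h2, ← h]
      ring


noncomputable def nbrW (d : ℕ) (p : Fin d × Bool) : ℕ → Fin d → ℤ :=
  fun i => if i = 0 then 0 else Pi.single p.1 (if p.2 then 1 else -1)

lemma nbrW_nbr (d : ℕ) (p : Fin d × Bool) : IsNbr d (Pi.single p.1 (if p.2 then (1:ℤ) else -1)) 0 := by
  unfold IsNbr
  rw [Finset.sum_eq_single p.1]
  · rcases p.2 <;> simp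
  · intro j _ hj
    simp [Pi.single_eq_of_ne hj]
  · simp

lemma nbrW_mem (d : ℕ) (p : Fin d × Bool) : nbrW d p ∈ SAWset d 1 := by
  have hval : nbrW d p 1 = Pi.single p.1 (if p.2 then (1:ℤ) else -1) := by simp [nbrW]
  have hne : nbrW d p 1 ≠ 0 := by
    rw [hval]
    intro h
    have := nbrW_nbr d p
    rw [h] at this
    simp [IsNbr] at this
  refine ⟨by simp [nbrW], ?_, ?_, ?_⟩
  · intro i hi
    interval_cases i
    have := nbrW_nbr d p
    simpa [nbrW, IsNbr] using this
  · have h00 : nbrW d p 0 = 0 := by simp [nbrW]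
    intro i hi j hj h
    interval_cases i <;> interval_cases j
    · rfl
    · exact absurd (h.symm.trans h00) hne
    · exact absurd (h.trans h00) hne
    · rfl
  · intro i hi
    simp only [nbrW]
    have h1 : ¬ (i = 0) := by omega
    simp [h1]

lemma nbrW_inj (d : ℕ) : Function.Injective (nbrW d) := by
  rintro ⟨j₁, b₁⟩ ⟨j₂, b₂⟩ h
  have h1 := congrFun h 1
  simp only [nbrW, if_neg one_ne_zero] at h1
  have hj : j₁ = j₂ := by
    by_contra hne
    have := congrFun h1 j₁
    rcases b₁ <;> simp_all [Pi.single_eq_of_ne (Ne.symm hne)]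
  subst hj
  have := congrFun h1 j₁
  rw [Pi.single_eq_same, Pi.single_eq_same] at this
  rcases b₁ <;> rcases b₂ <;> simp_all

lemma SAW_one_nbr {d : ℕ} {ζ : ℕ → Fin d → ℤ} (hζ : ζ ∈ SAWset d 1) : IsNbr d (ζ 1) 0 := by
  have := hζ.2.1 0 one_pos
  rwa [hζ.1] at this

lemma nbrW_surj {d : ℕ} {ζ : ℕ → Fin d → ℤ} (hζ : ζ ∈ SAWset d 1) :
    ∃ p, nbrW d p = ζ := by
  classical
  obtain ⟨h0, hnb, hinj, hfr⟩ := hζ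
  have hn : (∑ j, (ζ 1 j).natAbs) = 1 := by
    have := SAW_one_nbr ⟨h0, hnb, hinj, hfr⟩
    simpa [IsNbr] using this
  have hex : ∃ j₀, (ζ 1 j₀).natAbs ≠ 0 := by
    by_contra hc
    push_neg at hc
    rw [Finset.sum_eq_zero (fun j _ => hc j)] at hn
    omega
  obtain ⟨j₀, hj₀⟩ := hex
  have hsplit0 : (ζ 1 j₀).natAbs + ∑ j ∈ Finset.univ.erase j₀, (ζ 1 j).natAbs
      = ∑ j, (ζ 1 j).natAbs :=
    Finset.add_sum_erase Finset.univ (fun j => (ζ 1 j).natAbs) (Finset.mem_univ j₀)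
  have hsplit : (ζ 1 j₀).natAbs + ∑ j ∈ Finset.univ.erase j₀, (ζ 1 j).natAbs = 1 :=
    hsplit0.trans hn
  have h1 : (ζ 1 j₀).natAbs = 1 := by omega
  have hrest : ∑ j ∈ Finset.univ.erase j₀, (ζ 1 j).natAbs = 0 := by omega
  have hz : ∀ j, j ≠ j₀ → ζ 1 j = 0 := by
    intro j hj
    have := (Finset.sum_eq_zero_iff).mp hrest j (by simp [hj])
    omega
  have hval : ζ 1 = Pi.single j₀ (ζ 1 j₀) := by
    funext j
    rcases eq_or_ne j j₀ with rfl | hj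
    · simp
    · simp [Pi.single_eq_of_ne hj, hz j hj]
  refine ⟨(j₀, decide (ζ 1 j₀ = 1)), ?_⟩
  funext i
  rcases Nat.eq_zero_or_pos i with rfl | hi
  · simp [nbrW, h0]
  · have hfr' : ζ i = ζ 1 := hfr i hi
    have hne : ¬ (i = 0) := by omega
    rw [hfr', hval]
    simp only [nbrW, if_neg hne]
    rcases Int.natAbs_eq_iff.mp h1 with h | h
    · simp [h]
    · rw [h]; norm_num


lemma finsum_eq_finset {α M : Type*} [AddCommMonoid M] {s : Set α} (hs : s.Finite)
    (f : α → M) : (∑ᶠ i ∈ s, f i) = ∑ i ∈ hs.toFinset, f i := by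
  rw [← finsum_mem_coe_finset, Set.Finite.coe_toFinset]

lemma isNbr_neg {d : ℕ} {e : Fin d → ℤ} (h : IsNbr d e 0) : IsNbr d (-e) 0 := by
  unfold IsNbr at *
  rw [← h]
  apply Finset.sum_congr rfl
  intro j _
  simp only [Pi.neg_apply, Pi.zero_apply, sub_zero, Int.natAbs_neg]

/-- the connective constant via escape probabilities of the infinite SAW:
`μ = 2d · P(0 ∉ η^∞[1,∞) | η^∞(0) = e)` for every neighbour `e` of the origin
(translating so that the walk starts at `0`, this is the event `∀ i ≥ 1, η^∞(i) ≠ -e`),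
and `μ^k = c_k · P(η^∞[1,∞) ∩ η^k[1,k] = ∅)` for an independent uniform `k`-step SAW
(written as the sum over `ζ ∈ SAW_k` of the avoidance probabilities). -/
theorem connective_constant_escape (d : ℕ) (hd : 0 < d)
    (P : Measure (ℕ → Fin d → ℤ)) [IsProbabilityMeasure P]
    (μ : ℝ) (hμ : 0 < μ) (hsupp : P (InfSAW d) = 1)
    (hdmp : ∀ k (ζ : ℕ → Fin d → ℤ), ζ ∈ SAWset d k →
      (P (startSet d k ζ)).toReal = μ⁻¹ ^ k * (P (escSet d k ζ)).toReal)
    (hsym : ∀ e₁ e₂ : Fin d → ℤ, IsNbr d e₁ 0 → IsNbr d e₂ 0 →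
      P {ω | ∀ i, 1 ≤ i → ω i ≠ -e₁} = P {ω | ∀ i, 1 ≤ i → ω i ≠ -e₂}) :
    (∀ e : Fin d → ℤ, IsNbr d e 0 →
      μ = 2 * d * (P {ω | ∀ i, 1 ≤ i → ω i ≠ -e}).toReal) ∧
    ∀ k : ℕ, μ ^ k = ∑ᶠ ζ ∈ SAWset d k,
      (P {ω | ∀ i, 1 ≤ i → ∀ j, 1 ≤ j → j ≤ k → ω i ≠ ζ j}).toReal := by
  classical
  have hSmeas := InfSAW_measurable d
  have part2 : ∀ k : ℕ, μ ^ k = ∑ᶠ ζ ∈ SAWset d k,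
      (P {ω | ∀ i, 1 ≤ i → ∀ j, 1 ≤ j → j ≤ k → ω i ≠ ζ j}).toReal := by
    intro k
    have hfin := SAW_finite d k
    set f : (ℕ → Fin d → ℤ) → ℝ :=
      fun ζ => (P {ω | ∀ i, 1 ≤ i → ∀ j, 1 ≤ j → j ≤ k → ω i ≠ ζ j}).toReal with hf
    have hsum1 : ∑ ζ ∈ hfin.toFinset, (P (startSet d k ζ)).toReal = 1 := by
      have h1 := sum_start d k P hsupp hfin
      have h2 : (∑ ζ ∈ hfin.toFinset, P (startSet d k ζ)).toReal = (1 : ENNReal).toReal := by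
        rw [h1]
      rw [ENNReal.toReal_sum (fun ζ _ => measure_ne_top P _)] at h2
      simpa using h2
    have hesc : ∀ ζ ∈ hfin.toFinset, (P (escSet d k ζ)).toReal = f (revP k ζ) := by
      intro ζ hζ
      rw [Set.Finite.mem_toFinset] at hζ
      exact congrArg ENNReal.toReal (meas_congr P hSmeas hsupp (esc_target hζ))
    have key : ∑ ζ ∈ hfin.toFinset, f (revP k ζ) = ∑ ζ ∈ hfin.toFinset, f ζ := by
      apply Finset.sum_nbij' (i := revP k) (j := revP k)
      · intro ζ hζ
        rw [Set.Finite.mem_toFinset] at *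
        exact rev_mem hζ
      · intro ζ hζ
        rw [Set.Finite.mem_toFinset] at *
        exact rev_mem hζ
      · intro ζ hζ
        rw [Set.Finite.mem_toFinset] at hζ
        exact rev_rev hζ
      · intro ζ hζ
        rw [Set.Finite.mem_toFinset] at hζ
        exact rev_rev hζ
      · intro ζ hζ
        rfl
    calc μ ^ k = μ ^ k * ∑ ζ ∈ hfin.toFinset, (P (startSet d k ζ)).toReal := by
          rw [hsum1, mul_one]
      _ = ∑ ζ ∈ hfin.toFinset, μ ^ k * (P (startSet d k ζ)).toReal := Finset.mul_sum _ _ _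
      _ = ∑ ζ ∈ hfin.toFinset, (P (escSet d k ζ)).toReal := by
          refine Finset.sum_congr rfl fun ζ hζ => ?_
          rw [Set.Finite.mem_toFinset] at hζ
          rw [hdmp k ζ hζ, ← mul_assoc, ← mul_pow, mul_inv_cancel₀ (ne_of_gt hμ), one_pow,
            one_mul]
      _ = ∑ ζ ∈ hfin.toFinset, f (revP k ζ) := Finset.sum_congr rfl hesc
      _ = ∑ ζ ∈ hfin.toFinset, f ζ := key
      _ = ∑ᶠ ζ ∈ SAWset d k, f ζ := (finsum_eq_finset hfin f).symm
  refine ⟨?_, part2⟩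
  intro e he
  have h2 := part2 1
  rw [pow_one] at h2
  have hfin := SAW_finite d 1
  rw [finsum_eq_finset hfin _] at h2
  have hterm : ∀ ζ ∈ hfin.toFinset,
      (P {ω | ∀ i, 1 ≤ i → ∀ j, 1 ≤ j → j ≤ 1 → ω i ≠ ζ j}).toReal
        = (P {ω | ∀ i, 1 ≤ i → ω i ≠ -e}).toReal := by
    intro ζ hζ
    rw [Set.Finite.mem_toFinset] at hζ
    have hset : {ω : ℕ → Fin d → ℤ | ∀ i, 1 ≤ i → ∀ j, 1 ≤ j → j ≤ 1 → ω i ≠ ζ j}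
        = {ω | ∀ i, 1 ≤ i → ω i ≠ -(-(ζ 1))} := by
      ext ω
      simp only [Set.mem_setOf_eq]
      constructor
      · intro h i hi
        simpa using h i hi 1 le_rfl le_rfl
      · intro h i hi j hj1 hj2
        have hj : j = 1 := le_antisymm hj2 hj1
        subst hj
        simpa using h i hi
    rw [hset, hsym (-(ζ 1)) e (isNbr_neg (SAW_one_nbr hζ)) he]
  rw [Finset.sum_congr rfl hterm, Finset.sum_const, nsmul_eq_mul] at h2
  have hcard : hfin.toFinset.card = 2 * d := by
    have himg : hfin.toFinset = Finset.image (nbrW d) Finset.univ := by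
      ext ζ
      simp only [Set.Finite.mem_toFinset, Finset.mem_image, Finset.mem_univ, true_and]
      constructor
      · intro h
        obtain ⟨p, hp⟩ := nbrW_surj h
        exact ⟨p, hp⟩
      · rintro ⟨p, rfl⟩
        exact nbrW_mem d p
    rw [himg, Finset.card_image_of_injective _ (nbrW_inj d), Finset.card_univ]
    simp [Fintype.card_prod]
    ring
  rw [hcard] at h2
  push_cast at h2 ⊢
  linarith
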